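/- Let ε > 0, r₁ = 1, and suppose a real random variable Λ has a continuous density near x > 0, so that P(|Λ − x| < ε) ≤ K₁ ε for some constant K₁ and all ε ∈ (0,1]. Suppose further that approximations Λₙ with error bounds Δₙ ≥ |Λ − Λₙ| satisfy P(inf{n : Δₙ < ε} > n) ≤ K₂ ε^{−η} e^{−sn} for constants K₂, η, s > 0. Then the number of steps B(x) = inf{n : Δₙ < |Λₙ − x|} needed to determine the indicator 1{Λ > x} satisfies P(B(x) > n) ≤ K₀ e^{−sn/(1+η)} for some constant K₀ > 0 and all n ∈ ℕ, and in particular B(x) has finite exponential moments of all orders less than s/(1+η). -/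
import Mathlib


open MeasureTheory ProbabilityTheory

private lemma nat_sInf_eq_iff (S : Set ℕ) (n : ℕ) :
    sInf S = n ↔ (∀ m < n, m ∉ S) ∧ (n ∈ S ∨ ((∀ m, m ∉ S) ∧ n = 0)) := by
  constructor
  · rintro rfl
    refine ⟨fun m hm hmS => absurd (Nat.sInf_le hmS) (by omega), ?_⟩
    rcases Set.eq_empty_or_nonempty S with hS | hS
    · exact Or.inr ⟨by simp [hS], by simp [hS, Nat.sInf_empty]⟩
    · exact Or.inl (Nat.sInf_mem hS)
  · rintro ⟨h1, h2 | ⟨h2, rfl⟩⟩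
    · refine le_antisymm (Nat.sInf_le h2) (le_of_not_gt fun h => ?_)
      exact h1 _ h (Nat.sInf_mem ⟨n, h2⟩)
    · have : S = ∅ := Set.eq_empty_iff_forall_notMem.2 h2
      simp [this]

/-- **Complexity of exact simulation of the indicator `1{Λ > x}`.**  Let `Λ` be a real
random variable with `P(|Λ - x| < ε) ≤ K₁ ε` for `ε ∈ (0,1]` and some `x > 0`, and let
`Λₙ` be approximations with error bounds `Δₙ ≥ |Λ - Λₙ|` satisfying
`P(N(ε) > n) ≤ K₂ ε^{-η} e^{-sn}` where `{N(ε) > n} = {∀ m < n, Δₘ ≥ ε}`.  Then the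
number of steps `B(x) = inf{n : Δₙ < |Λₙ - x|}` needed to determine `1{Λ > x}` satisfies
`P(B(x) > n) ≤ K₀ e^{-sn/(1+η)}` for some `K₀ > 0`, and in particular `B(x)` has finite
exponential moments of all orders less than `s/(1+η)`. -/
theorem indicator_exact_simulation_complexity
    {Ω : Type*} [MeasureSpace Ω] [IsProbabilityMeasure (ℙ : Measure Ω)]
    (x : ℝ) (hx : 0 < x)
    (Λ : Ω → ℝ) (Λ' : ℕ → Ω → ℝ) (Δ : ℕ → Ω → ℝ)
    (hΛm : Measurable Λ) (hΛ'm : ∀ n, Measurable (Λ' n)) (hΔm : ∀ n, Measurable (Δ n))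
    (hΔ0 : ∀ n ω, 0 ≤ Δ n ω)
    (hΔ : ∀ n, ∀ᵐ ω ∂ℙ, |Λ ω - Λ' n ω| ≤ Δ n ω)
    (K₁ K₂ η s : ℝ) (hK₁ : 0 < K₁) (hK₂ : 0 < K₂) (hη : 0 < η) (hs : 0 < s)
    (hdens : ∀ ε : ℝ, ε ∈ Set.Ioc (0 : ℝ) 1 →
      ℙ {ω | |Λ ω - x| < ε} ≤ ENNReal.ofReal (K₁ * ε))
    (hN : ∀ ε : ℝ, ε ∈ Set.Ioc (0 : ℝ) 1 → ∀ n : ℕ,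
      ℙ {ω | ∀ m < n, ε ≤ Δ m ω} ≤ ENNReal.ofReal (K₂ * ε ^ (-η) * Real.exp (-s * n))) :
    ∃ K₀ : ℝ, 0 < K₀ ∧
      (∀ n : ℕ, ℙ {ω | ∀ m < n, |Λ' m ω - x| ≤ Δ m ω}
        ≤ ENNReal.ofReal (K₀ * Real.exp (-s * n / (1 + η)))) ∧
      (∀ l : ℝ, 0 < l → l < s / (1 + η) →
        ∫⁻ ω, ENNReal.ofReal
            (Real.exp (l * (sInf {n : ℕ | Δ n ω < |Λ' n ω - x|} : ℕ))) ∂ℙ < ⊤) := by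
  have h1η : (0:ℝ) < 1 + η := by linarith
  refine ⟨K₁ + K₂ * (2:ℝ) ^ η, by positivity, ?_⟩
  have part1 : ∀ n : ℕ, ℙ {ω | ∀ m < n, |Λ' m ω - x| ≤ Δ m ω}
      ≤ ENNReal.ofReal ((K₁ + K₂ * (2:ℝ) ^ η) * Real.exp (-s * n / (1 + η))) := by
    intro n
    set t : ℝ := Real.exp (-s * n / (1 + η)) with ht
    have htpos : 0 < t := Real.exp_pos _
    have ht1 : t ≤ 1 := by
      rw [ht, Real.exp_le_one_iff]
      apply div_nonpos_of_nonpos_of_nonneg _ h1η.le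
      have : (0:ℝ) ≤ s * n := by positivity
      linarith
    set ε : ℝ := t / 2 with hε
    have hεIoc : ε ∈ Set.Ioc (0:ℝ) 1 := ⟨by positivity, by rw [hε]; linarith⟩
    have h2ε : 2 * ε = t := by rw [hε]; ring
    have hG : ℙ {ω | ¬ ∀ m, |Λ ω - Λ' m ω| ≤ Δ m ω} = 0 := by
      have h := ae_all_iff.2 hΔ
      rwa [ae_iff] at h
    have hsub : {ω | ∀ m < n, |Λ' m ω - x| ≤ Δ m ω} ⊆
        ({ω | |Λ ω - x| < 2 * ε} ∪ {ω | ∀ m < n, ε ≤ Δ m ω}) ∪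
          {ω | ¬ ∀ m, |Λ ω - Λ' m ω| ≤ Δ m ω} := by
      intro ω hω
      by_cases hg : ∀ m, |Λ ω - Λ' m ω| ≤ Δ m ω
      · by_cases hall : ∀ m < n, ε ≤ Δ m ω
        · exact Or.inl (Or.inr hall)
        · push_neg at hall
          obtain ⟨m, hm, hlt⟩ := hall
          have h1 := hω m hm
          have h2 := hg m
          have h3 : |Λ ω - x| ≤ |Λ ω - Λ' m ω| + |Λ' m ω - x| := abs_sub_le _ _ _
          exact Or.inl (Or.inl (by simp only [Set.mem_setOf_eq]; linarith))
      · exact Or.inr hg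
    calc ℙ {ω | ∀ m < n, |Λ' m ω - x| ≤ Δ m ω}
        ≤ ℙ (({ω | |Λ ω - x| < 2 * ε} ∪ {ω | ∀ m < n, ε ≤ Δ m ω}) ∪
            {ω | ¬ ∀ m, |Λ ω - Λ' m ω| ≤ Δ m ω}) := measure_mono hsub
      _ ≤ ℙ ({ω | |Λ ω - x| < 2 * ε} ∪ {ω | ∀ m < n, ε ≤ Δ m ω}) +
            ℙ {ω | ¬ ∀ m, |Λ ω - Λ' m ω| ≤ Δ m ω} := measure_union_le _ _
      _ = ℙ ({ω | |Λ ω - x| < 2 * ε} ∪ {ω | ∀ m < n, ε ≤ Δ m ω}) := by rw [hG, add_zero]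
      _ ≤ ℙ {ω | |Λ ω - x| < 2 * ε} + ℙ {ω | ∀ m < n, ε ≤ Δ m ω} := measure_union_le _ _
      _ ≤ ENNReal.ofReal (K₁ * (2 * ε)) +
            ENNReal.ofReal (K₂ * ε ^ (-η) * Real.exp (-s * n)) := by
          gcongr
          · exact hdens (2 * ε) ⟨by positivity, by rw [h2ε]; exact ht1⟩
          · exact hN ε hεIoc n
      _ ≤ ENNReal.ofReal ((K₁ + K₂ * (2:ℝ) ^ η) * t) := by
          rw [← ENNReal.ofReal_add (by positivity) (by positivity)]
          apply ENNReal.ofReal_le_ofReal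
          have hkey : K₂ * ε ^ (-η) * Real.exp (-s * n) = K₂ * (2:ℝ) ^ η * t := by
            rw [hε, ht, Real.div_rpow (Real.exp_pos _).le (by norm_num : (0:ℝ) ≤ 2),
              ← Real.exp_mul, Real.rpow_neg (by norm_num : (0:ℝ) ≤ 2), div_inv_eq_mul]
            rw [mul_comm (Real.exp _) ((2:ℝ) ^ η), ← mul_assoc, mul_assoc (K₂ * 2 ^ η),
              ← Real.exp_add]
            congr 1
            field_simp
            ring
          rw [hkey, h2ε]
          exact le_of_eq (by ring)
  refine ⟨part1, ?_⟩
  intro l hl hls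
  set B : Ω → ℕ := fun ω => sInf {n : ℕ | Δ n ω < |Λ' n ω - x|} with hB
  have hSm : ∀ n, MeasurableSet {ω | Δ n ω < |Λ' n ω - x|} :=
    fun n => measurableSet_lt (hΔm n) ((hΛ'm n).sub measurable_const).abs
  have hBm : ∀ n, MeasurableSet {ω | B ω = n} := by
    intro n
    have heq : {ω | B ω = n} =
        ((⋂ m ∈ Set.Iio n, {ω | Δ m ω < |Λ' m ω - x|}ᶜ) ∩
          ({ω | Δ n ω < |Λ' n ω - x|} ∪
            ((⋂ m, {ω | Δ m ω < |Λ' m ω - x|}ᶜ) ∩ {_ω : Ω | n = 0}))) := by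
      ext ω
      simp only [hB, Set.mem_setOf_eq, nat_sInf_eq_iff, Set.mem_inter_iff, Set.mem_iInter,
        Set.mem_union, Set.mem_compl_iff, Set.mem_Iio]
    rw [heq]
    exact (MeasurableSet.iInter fun m => MeasurableSet.iInter fun _ => (hSm m).compl).inter
      (((hSm n).union (((MeasurableSet.iInter fun m => (hSm m).compl)).inter
        (MeasurableSet.const _))))
  have hpt : ∀ ω, ENNReal.ofReal (Real.exp (l * (B ω : ℕ))) =
      ∑' n : ℕ, Set.indicator {ω' | B ω' = n}
        (fun _ => ENNReal.ofReal (Real.exp (l * n))) ω := by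
    intro ω
    rw [tsum_eq_single (B ω)]
    · simp [Set.indicator_of_mem, Set.mem_setOf_eq]
    · intro n hn
      exact Set.indicator_of_notMem (by simp [Set.mem_setOf_eq]; exact fun h => hn h.symm) _
  have hBsub : ∀ n, {ω | B ω = n} ⊆ {ω | ∀ m < n, |Λ' m ω - x| ≤ Δ m ω} := by
    intro n ω hω m hm
    by_contra hc
    push_neg at hc
    have : B ω ≤ m := Nat.sInf_le hc
    simp only [Set.mem_setOf_eq] at hω
    omega
  calc ∫⁻ ω, ENNReal.ofReal (Real.exp (l * (sInf {n : ℕ | Δ n ω < |Λ' n ω - x|} : ℕ))) ∂ℙ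
      = ∫⁻ ω, ∑' n : ℕ, Set.indicator {ω' | B ω' = n}
          (fun _ => ENNReal.ofReal (Real.exp (l * n))) ω ∂ℙ := by
        refine lintegral_congr fun ω => ?_
        exact hpt ω
    _ = ∑' n : ℕ, ∫⁻ ω, Set.indicator {ω' | B ω' = n}
          (fun _ => ENNReal.ofReal (Real.exp (l * n))) ω ∂ℙ := by
        refine lintegral_tsum fun n => ?_
        exact (measurable_const.indicator (hBm n)).aemeasurable
    _ = ∑' n : ℕ, ENNReal.ofReal (Real.exp (l * n)) * ℙ {ω | B ω = n} := by
        refine tsum_congr fun n => ?_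
        rw [lintegral_indicator_const (hBm n)]
    _ ≤ ∑' n : ℕ, ENNReal.ofReal (Real.exp (l * n)) *
          ENNReal.ofReal ((K₁ + K₂ * (2:ℝ) ^ η) * Real.exp (-s * n / (1 + η))) := by
        gcongr with n
        exact le_trans (measure_mono (hBsub n)) (part1 n)
    _ = ∑' n : ℕ, ENNReal.ofReal (K₁ + K₂ * (2:ℝ) ^ η) *
          (ENNReal.ofReal (Real.exp (l - s / (1 + η)))) ^ n := by
        refine tsum_congr fun n => ?_
        rw [← ENNReal.ofReal_pow (Real.exp_pos _).le, ← Real.exp_nat_mul,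
          ← ENNReal.ofReal_mul (Real.exp_pos _).le,
          ← ENNReal.ofReal_mul (by positivity)]
        congr 1
        rw [mul_left_comm, ← Real.exp_add]
        congr 2
        ring
    _ = ENNReal.ofReal (K₁ + K₂ * (2:ℝ) ^ η) *
          (1 - ENNReal.ofReal (Real.exp (l - s / (1 + η))))⁻¹ := by
        rw [ENNReal.tsum_mul_left, ENNReal.tsum_geometric]
    _ < ⊤ := by
        apply ENNReal.mul_lt_top ENNReal.ofReal_lt_top
        rw [ENNReal.inv_lt_top]
        apply tsub_pos_of_lt
        exact ENNReal.ofReal_lt_one.2 (by rw [Real.exp_lt_one_iff]; linarith)
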